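/- arXiv:2302.10610 — 2 statements merged into one kernel-verified Lean document; each statement's English description precedes it below -/
import Mathlib

section
/- Fix an integer m ≥ 1 and γ, α ∈ (0,1). The FDP stepdown thresholds αᵢ = (⌊γi⌋ + 1)·α / (m + ⌊γi⌋ + 1 − i) for 1 ≤ i ≤ m form a nondecreasing sequence in i. -/
lemma fdp_step (m n : ℕ) (γ α : ℝ) (hγ0 : 0 < γ) (hα : 0 < α)
    (hn : 1 ≤ n) (hnm : n + 1 ≤ m) :
    ((⌊γ * (n:ℝ)⌋ : ℝ) + 1) * α / ((m:ℝ) + (⌊γ * (n:ℝ)⌋:ℝ) + 1 - n)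
      ≤ ((⌊γ * ((n+1:ℕ):ℝ)⌋ : ℝ) + 1) * α / ((m:ℝ) + (⌊γ * ((n+1:ℕ):ℝ)⌋:ℝ) + 1 - ((n+1:ℕ):ℝ)) := by
  have hab : ⌊γ * (n:ℝ)⌋ ≤ ⌊γ * ((n+1:ℕ):ℝ)⌋ := by
    apply Int.floor_le_floor
    have h1 : (n:ℝ) ≤ ((n+1:ℕ):ℝ) := by push_cast; linarith
    nlinarith
  have ha0 : (0:ℤ) ≤ ⌊γ * (n:ℝ)⌋ := Int.floor_nonneg.mpr (by positivity)
  have hab' : (⌊γ * (n:ℝ)⌋ : ℝ) ≤ (⌊γ * ((n+1:ℕ):ℝ)⌋ : ℝ) := by exact_mod_cast hab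
  have ha0' : (0:ℝ) ≤ (⌊γ * (n:ℝ)⌋ : ℝ) := by exact_mod_cast ha0
  set a := (⌊γ * (n:ℝ)⌋ : ℝ)
  set b := (⌊γ * ((n+1:ℕ):ℝ)⌋ : ℝ)
  have hnm' : (n:ℝ) + 1 ≤ (m:ℝ) := by exact_mod_cast hnm
  have hd1 : 0 < (m:ℝ) + a + 1 - n := by linarith
  have hd2 : 0 < (m:ℝ) + b + 1 - ((n+1:ℕ):ℝ) := by push_cast; linarith
  rw [div_le_div_iff₀ hd1 hd2]
  push_cast
  nlinarith [mul_nonneg (sub_nonneg.mpr hab') (sub_nonneg.mpr (by linarith : (n:ℝ) ≤ (m:ℝ))),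
    mul_pos hα (show (0:ℝ) < b - a + 1 by linarith)]

/-- the FDP stepdown thresholds
αᵢ = (⌊γi⌋+1)·α / (m + ⌊γi⌋ + 1 − i) are nondecreasing in i on 1..m. -/
theorem fdp_thresholds_monotone
    (m : ℕ) (hm : 1 ≤ m) (γ α : ℝ)
    (hγ : γ ∈ Set.Ioo (0 : ℝ) 1) (hα : α ∈ Set.Ioo (0 : ℝ) 1) :
    let thr : ℕ → ℝ := fun i =>
      ((⌊γ * (i : ℝ)⌋ : ℝ) + 1) * α / ((m : ℝ) + (⌊γ * (i : ℝ)⌋ : ℝ) + 1 - i)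
    ∀ i j, 1 ≤ i → i ≤ j → j ≤ m → thr i ≤ thr j := by
  intro thr i j hi
  induction j with
  | zero => intro h1 h2; omega
  | succ n ih =>
    intro hij hjm
    rcases Nat.lt_or_ge i (n+1) with h | h
    · have hle : thr i ≤ thr n := ih (by omega) (by omega)
      refine hle.trans ?_
      have := fdp_step m n γ α hγ.1 hα.1 (by omega) (by omega)
      simpa [thr] using this
    · have : i = n + 1 := by omega
      subst this
      exact le_refl _
end

section
/- Let λ₁ ≥ λ₂ ≥ … ≥ λ_m ≥ 0 with λ₁ > 0. The sorted ℓ₁ penalty J_λ(β) = Σ_{i=1}^{m} λᵢ |β|₍ᵢ₎, where |β|₍₁₎ ≥ … ≥ |β|₍ₘ₎ are the absolute values of the coordinates of β sorted in nonincreasing order, is a norm on ℝᵐ; in particular it is convex, absolutely homogeneous, and vanishes only at 0. -/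
open Finset

/-- `sortedAbs β i` is the (i+1)-th largest among |β₁|,…,|β_m| (nonincreasing order). -/
noncomputable def sortedAbs {m : ℕ} (β : Fin m → ℝ) : Fin m → ℝ :=
  fun i => |β (Tuple.sort (fun j => |β j|) i.rev)|

/-- The sorted ℓ₁ penalty J_λ(β) = Σᵢ λᵢ |β|₍ᵢ₎. -/
noncomputable def slopePen {m : ℕ} (lam : Fin m → ℝ) (β : Fin m → ℝ) : ℝ :=
  ∑ i, lam i * sortedAbs β i

namespace SlopeAux

/-- The permutation realizing `sortedAbs`. -/
noncomputable def eβ {m : ℕ} (β : Fin m → ℝ) : Equiv.Perm (Fin m) :=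
  Fin.revPerm.trans (Tuple.sort (fun j => |β j|))

lemma sortedAbs_eq {m : ℕ} (β : Fin m → ℝ) :
    sortedAbs β = (fun j => |β j|) ∘ (eβ β) := rfl

lemma sortedAbs_antitone {m : ℕ} (β : Fin m → ℝ) : Antitone (sortedAbs β) := by
  intro i j hij
  exact Tuple.monotone_sort (fun j => |β j|) (Fin.rev_le_rev.mpr hij)

lemma antitone_comp_unique {m : ℕ} (F : Fin m → ℝ) (σ τ : Equiv.Perm (Fin m))
    (hσ : Antitone (F ∘ σ)) (hτ : Antitone (F ∘ τ)) : F ∘ σ = F ∘ τ := by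
  have h1 : Monotone (F ∘ (Fin.revPerm.trans σ)) := by
    intro i j hij
    exact hσ (Fin.rev_le_rev.mpr hij)
  have h2 : Monotone (F ∘ (Fin.revPerm.trans τ)) := by
    intro i j hij
    exact hτ (Fin.rev_le_rev.mpr hij)
  funext i
  have := congrFun (Tuple.unique_monotone h1 h2) (Fin.rev i)
  simpa [Fin.rev_rev] using this

lemma monovary_lam_sorted {m : ℕ} (lam : Fin m → ℝ) (hmono : Antitone lam)
    (β : Fin m → ℝ) : Monovary lam (sortedAbs β) := by
  intro i j hij
  have hji : j ≤ i := by
    by_contra h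
    exact absurd (sortedAbs_antitone β (le_of_not_ge h)) (not_le.mpr hij)
  exact hmono hji

lemma key {m : ℕ} (lam : Fin m → ℝ) (hmono : Antitone lam) (β : Fin m → ℝ)
    (π : Equiv.Perm (Fin m)) :
    ∑ i, lam i * |β (π i)| ≤ slopePen lam β := by
  have hmv : Monovary lam (sortedAbs β) := monovary_lam_sorted lam hmono β
  have h := hmv.sum_mul_comp_perm_le_sum_mul (σ := π.trans (eβ β).symm)
  calc ∑ i, lam i * |β (π i)|
      = ∑ i, lam i * sortedAbs β ((π.trans (eβ β).symm) i) := by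
        refine Finset.sum_congr rfl fun i _ => ?_
        rw [sortedAbs_eq]
        simp
    _ ≤ slopePen lam β := h

lemma sortedAbs_smul {m : ℕ} (c : ℝ) (β : Fin m → ℝ) :
    sortedAbs (c • β) = fun i => |c| * sortedAbs β i := by
  have hF : (fun j => |(c • β) j|) = fun j => |c| * |β j| := by
    funext j; simp [abs_mul]
  have e1 : sortedAbs (c • β) = (fun j => |c| * |β j|) ∘ (eβ (c • β)) := by
    rw [sortedAbs_eq, hF]
  have e2 : (fun i => |c| * sortedAbs β i) = (fun j => |c| * |β j|) ∘ (eβ β) := by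
    funext i; rw [sortedAbs_eq]; rfl
  have h1 : Antitone ((fun j => |c| * |β j|) ∘ (eβ (c • β))) := by
    rw [← e1]; exact sortedAbs_antitone _
  have h2 : Antitone ((fun j => |c| * |β j|) ∘ (eβ β)) := by
    rw [← e2]
    intro i j hij
    exact mul_le_mul_of_nonneg_left (sortedAbs_antitone β hij) (abs_nonneg c)
  rw [e1, e2]
  exact antitone_comp_unique _ _ _ h1 h2

end SlopeAux

open SlopeAux

/-- for nonincreasing nonnegative weights λ₁ ≥ … ≥ λ_m ≥ 0 with λ₁ > 0,
the sorted ℓ₁ penalty is a norm on ℝᵐ: nonnegative, subadditive, absolutely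
homogeneous, vanishing exactly at 0, and in particular convex. -/
theorem slopePen_is_norm
    {m : ℕ} (hm : 0 < m) (lam : Fin m → ℝ)
    (hmono : Antitone lam) (hnonneg : ∀ i, 0 ≤ lam i)
    (hpos : 0 < lam ⟨0, hm⟩) :
    (∀ β, 0 ≤ slopePen lam β) ∧
    (∀ β₁ β₂, slopePen lam (β₁ + β₂) ≤ slopePen lam β₁ + slopePen lam β₂) ∧
    (∀ (c : ℝ) (β), slopePen lam (c • β) = |c| * slopePen lam β) ∧
    (∀ β, slopePen lam β = 0 ↔ β = 0) ∧
    ConvexOn ℝ Set.univ (slopePen lam) := by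
  have hnn : ∀ β, 0 ≤ slopePen lam β := by
    intro β
    refine Finset.sum_nonneg fun i _ => mul_nonneg (hnonneg i) ?_
    exact abs_nonneg _
  have hsub : ∀ β₁ β₂, slopePen lam (β₁ + β₂) ≤ slopePen lam β₁ + slopePen lam β₂ := by
    intro β₁ β₂
    set e := eβ (β₁ + β₂) with he
    have h1 : slopePen lam (β₁ + β₂) = ∑ i, lam i * |(β₁ + β₂) (e i)| := rfl
    calc slopePen lam (β₁ + β₂)
        = ∑ i, lam i * |(β₁ + β₂) (e i)| := h1
      _ ≤ ∑ i, (lam i * |β₁ (e i)| + lam i * |β₂ (e i)|) := by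
          refine Finset.sum_le_sum fun i _ => ?_
          rw [← mul_add]
          exact mul_le_mul_of_nonneg_left (abs_add_le _ _) (hnonneg i)
      _ = (∑ i, lam i * |β₁ (e i)|) + ∑ i, lam i * |β₂ (e i)| := Finset.sum_add_distrib
      _ ≤ slopePen lam β₁ + slopePen lam β₂ :=
          add_le_add (key lam hmono β₁ e) (key lam hmono β₂ e)
  have hhom : ∀ (c : ℝ) (β), slopePen lam (c • β) = |c| * slopePen lam β := by
    intro c β
    unfold slopePen
    rw [sortedAbs_smul, Finset.mul_sum]
    exact Finset.sum_congr rfl fun i _ => by ring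
  have hzero : ∀ β, slopePen lam β = 0 ↔ β = 0 := by
    intro β
    constructor
    · intro hz
      by_contra hβ
      obtain ⟨j, hj⟩ := Function.ne_iff.mp hβ
      have hj' : 0 < |β j| := abs_pos.mpr hj
      have hd0 : |β j| ≤ sortedAbs β ⟨0, hm⟩ := by
        have : sortedAbs β ((eβ β).symm j) = |β j| := by
          rw [sortedAbs_eq]; simp
        rw [← this]
        refine sortedAbs_antitone β ?_
        exact Fin.mk_le_mk.mpr (Nat.zero_le _)
      have hterm : 0 < lam ⟨0, hm⟩ * sortedAbs β ⟨0, hm⟩ :=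
        mul_pos hpos (lt_of_lt_of_le hj' hd0)
      have hsum : lam ⟨0, hm⟩ * sortedAbs β ⟨0, hm⟩ ≤ slopePen lam β := by
        unfold slopePen
        refine Finset.single_le_sum (f := fun i => lam i * sortedAbs β i) (fun i _ => ?_) (Finset.mem_univ _)
        exact mul_nonneg (hnonneg i) (abs_nonneg _)
      linarith
    · intro h
      subst h
      simp [slopePen, sortedAbs]
  refine ⟨hnn, hsub, hhom, hzero, convex_univ, ?_⟩
  intro x _ y _ a b ha hb hab
  calc slopePen lam (a • x + b • y)
      ≤ slopePen lam (a • x) + slopePen lam (b • y) := hsub _ _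
    _ = |a| * slopePen lam x + |b| * slopePen lam y := by rw [hhom, hhom]
    _ = a * slopePen lam x + b * slopePen lam y := by
        rw [abs_of_nonneg ha, abs_of_nonneg hb]
    _ = a • slopePen lam x + b • slopePen lam y := by simp [smul_eq_mul]
end
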